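/- Let N ≥ 2, c > 0, b ∈ (0,1), and set b₁ = (1−b)/N. Let x ∈ ℝ^N satisfy x₁ ≥ x₂ ≥ … ≥ x_N > 0, Σᵢ xᵢ = c, and x_N ≥ b x₁. Define y ∈ ℝ^N by yᵢ = x_{i+1} + b₁ x₁ for 1 ≤ i ≤ N−1 and y_N = b x₁ + b₁ x₁. Then y₁ ≥ y₂ ≥ … ≥ y_N > 0, Σᵢ yᵢ = c, and y_N ≥ b y₁. -/

import Mathlib

/-- For homogeneous AIMD users under the index (reduce-the-maximum) policy, the
region where the reduced rate becomes the minimal rate is invariant: if the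
ordered rate vector `x` satisfies `x₁ ≥ … ≥ x_N > 0`, `∑ xᵢ = c` and
`x_N ≥ b x₁`, then the next ordered rate vector `y` (obtained by reducing `x₁`
to `b x₁` and adding `b₁ x₁ = (1-b)x₁/N` to every coordinate) is again ordered,
positive, sums to `c`, and satisfies `y_N ≥ b y₁`. -/
theorem aimd_index_region_invariant
    (N : ℕ) (hN : 2 ≤ N) (c b : ℝ) (hc : 0 < c) (hb : b ∈ Set.Ioo (0 : ℝ) 1)
    (b₁ : ℝ) (hb₁ : b₁ = (1 - b) / N)
    (x : Fin N → ℝ)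
    (hord : ∀ i j : Fin N, i ≤ j → x j ≤ x i)
    (hpos : ∀ i, 0 < x i)
    (hsum : ∑ i, x i = c)
    (hmin : b * x ⟨0, by omega⟩ ≤ x ⟨N - 1, by omega⟩)
    (y : Fin N → ℝ)
    (hy : ∀ i : Fin N, y i =
      if h : (i : ℕ) + 1 < N then x ⟨(i : ℕ) + 1, h⟩ + b₁ * x ⟨0, by omega⟩
      else b * x ⟨0, by omega⟩ + b₁ * x ⟨0, by omega⟩) :
    (∀ i j : Fin N, i ≤ j → y j ≤ y i)
    ∧ (∀ i, 0 < y i)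
    ∧ ∑ i, y i = c
    ∧ b * y ⟨0, by omega⟩ ≤ y ⟨N - 1, by omega⟩ := by
  obtain ⟨hb0, hb1⟩ := hb
  have hNR : (0:ℝ) < (N:ℝ) := by
    have : (0:ℕ) < N := by omega
    exact_mod_cast this
  have hb₁pos : 0 < b₁ := by
    rw [hb₁]; exact div_pos (by linarith) hNR
  have hx0 : 0 < x ⟨0, by omega⟩ := hpos _
  have hmono : ∀ (a c : ℕ) (ha : a < N) (hc' : c < N), a ≤ c →
      x ⟨c, hc'⟩ ≤ x ⟨a, ha⟩ := by
    intro a c ha hc' hac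
    exact hord ⟨a, ha⟩ ⟨c, hc'⟩ hac
  refine ⟨?_, ?_, ?_, ?_⟩
  · -- ordering
    intro i j hij
    rw [hy i, hy j]
    by_cases hj : (j : ℕ) + 1 < N
    · have hi : (i : ℕ) + 1 < N := by
        have : (i : ℕ) ≤ (j : ℕ) := hij
        omega
      rw [dif_pos hj, dif_pos hi]
      have := hmono (i+1) (j+1) hi hj (by have : (i:ℕ) ≤ j := hij; omega)
      linarith
    · rw [dif_neg hj]
      by_cases hi : (i : ℕ) + 1 < N
      · rw [dif_pos hi]
        have h1 : x ⟨N-1, by omega⟩ ≤ x ⟨(i:ℕ)+1, hi⟩ := hmono _ _ hi (by omega) (by omega)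
        linarith
      · rw [dif_neg hi]
  · -- positivity
    intro i
    rw [hy i]
    split
    · have := hpos ⟨(i:ℕ)+1, by omega⟩
      positivity
    · positivity
  · -- sum
    have hyi : ∀ i : Fin N, y i =
        (if h : (i : ℕ) + 1 < N then x ⟨(i : ℕ) + 1, h⟩ else b * x ⟨0, by omega⟩)
          + b₁ * x ⟨0, by omega⟩ := by
      intro i
      rw [hy i]
      split <;> rfl
    obtain ⟨m, rfl⟩ : ∃ m, N = m + 1 := ⟨N - 1, by omega⟩
    calc ∑ i, y i
        = (∑ i : Fin (m+1), (if h : (i : ℕ) + 1 < m + 1 then x ⟨(i : ℕ) + 1, h⟩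
            else b * x ⟨0, by omega⟩)) + (m+1) * (b₁ * x ⟨0, by omega⟩) := by
          rw [Finset.sum_congr rfl fun i _ => hyi i, Finset.sum_add_distrib,
            Finset.sum_const, Finset.card_univ, Fintype.card_fin, nsmul_eq_mul]
          push_cast; ring
      _ = ((∑ i : Fin m, x i.succ) + b * x ⟨0, by omega⟩) + (m+1) * (b₁ * x ⟨0, by omega⟩) := by
          rw [Fin.sum_univ_castSucc]
          congr 2
          · apply Finset.sum_congr rfl
            intro i _
            rw [dif_pos (by simp)]
            rfl
          · rw [dif_neg (by simp)]
      _ = c := by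
          have hs : x ⟨0, by omega⟩ + ∑ i : Fin m, x i.succ = c := by
            rw [← hsum, Fin.sum_univ_succ]
            rfl
          have hb₁' : ((m:ℝ)+1) * b₁ = 1 - b := by
            rw [hb₁]
            have : ((m+1 : ℕ) : ℝ) ≠ 0 := by positivity
            field_simp
            norm_num
          nlinarith [hx0]
  · -- b y₀ ≤ y_{N-1}
    rw [hy ⟨0, by omega⟩, hy ⟨N-1, by omega⟩]
    rw [dif_pos (by simp; omega), dif_neg (by simp; omega)]
    simp only [Fin.val_mk]
    have h1 : x ⟨0+1, by omega⟩ ≤ x ⟨0, by omega⟩ := hmono _ _ _ _ (by omega)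
    norm_num at h1 ⊢
    nlinarith [mul_le_mul_of_nonneg_left h1 hb0.le,
      mul_pos (show (0:ℝ) < 1 - b by linarith) (mul_pos hb₁pos hx0)]
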